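/- Let A_0, …, A_k ⊆ ℤ^n be full-dimensional configurations and B_0, …, B_r ⊆ ℤ^{n+k−r} nonempty configurations such that A_0 * … * A_k ≅ B_0 * … * B_r as configurations in ℤ^{n+k}. Then dim(B_i) ≥ min(k, n) for all i ∈ {0, …, r}. -/

import Mathlib

open scoped Pointwise

/-- The lattice `ℤ^n`. -/
abbrev ZLat (n : ℕ) := Fin n → ℤ

/-- Inclusion of `ℤ^n` into `ℝ^n`. -/
def toR {n : ℕ} (v : ZLat n) : Fin n → ℝ := fun i => (v i : ℝ)

/-- The dimension of a configuration: the dimension of its affine hull in `ℝ^n`. -/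
noncomputable def confDim {n : ℕ} (A : Finset (ZLat n)) : ℕ :=
  Module.finrank ℝ (affineSpan ℝ (toR '' (A : Set (ZLat n)))).direction

/-- `cayleyE k i` is `e_i ∈ ℤ^k`, where `e_0 = 0` and `e_1, …, e_k` are the
standard basis vectors. -/
def cayleyE (k : ℕ) (i : Fin (k + 1)) : ZLat k :=
  fun j => if (j : ℕ) + 1 = (i : ℕ) then 1 else 0

/-- The Cayley sum `A_0 * ⋯ * A_k ⊆ ℤ^{n+k}` of configurations `A_0, …, A_k ⊆ ℤ^n`. -/
def cayley {n k : ℕ} (A : Fin (k + 1) → Finset (ZLat n)) : Finset (ZLat (n + k)) :=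
  Finset.univ.biUnion fun i => (A i).image fun a => Fin.append a (cayleyE k i)

/-- The vertex set `Δ_k = {e_0, e_1, …, e_k} ⊆ ℤ^k` of the standard unimodular simplex. -/
def stdSimplexConfig (k : ℕ) : Finset (ZLat k) := Finset.univ.image (cayleyE k)

/-- The subgroup `⟨A - A⟩ ⊆ ℤ^n` generated by all differences of elements of `A`. -/
def diffSpan {n : ℕ} (A : Finset (ZLat n)) : AddSubgroup (ZLat n) :=
  AddSubgroup.closure {d | ∃ a ∈ A, ∃ b ∈ A, d = a - b}

/-- A family `A_0, …, A_k ⊆ ℤ^n` is spanning if `⟨A_0-A_0⟩ + ⋯ + ⟨A_k-A_k⟩ = ℤ^n`. -/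
def IsSpanningFamily {n k : ℕ} (A : Fin (k + 1) → Finset (ZLat n)) : Prop :=
  (⨆ i, diffSpan (A i)) = ⊤

/-- The Cayley sum of `A_0, …, A_k` is of join type if the natural homomorphism
`⟨A_0-A_0⟩ ⊕ ⋯ ⊕ ⟨A_k-A_k⟩ → ℤ^n`, `(a_0, …, a_k) ↦ a_0 + ⋯ + a_k`, is injective. -/
def JoinType {n k : ℕ} (A : Fin (k + 1) → Finset (ZLat n)) : Prop :=
  ∀ d : Fin (k + 1) → ZLat n, (∀ i, d i ∈ diffSpan (A i)) → ∑ i, d i = 0 → ∀ i, d i = 0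

/-- The lattice points of the affine hull of `A`, i.e. `aff(A) ∩ ℤ^n`. -/
def affLat {n : ℕ} (A : Finset (ZLat n)) : Set (ZLat n) :=
  {x | toR x ∈ affineSpan ℝ (toR '' (A : Set (ZLat n)))}

/-- Two configurations `A ⊆ ℤ^n`, `B ⊆ ℤ^m` are isomorphic if there is an affine
lattice isomorphism `aff(A) ∩ ℤ^n → aff(B) ∩ ℤ^m` mapping `A` onto `B`. -/
def ConfigIso {n m : ℕ} (A : Finset (ZLat n)) (B : Finset (ZLat m)) : Prop :=
  ∃ f : ZLat n → ZLat m, ∃ g : ZLat m → ZLat n,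
    (∀ x ∈ affLat A, f x ∈ affLat B) ∧
    (∀ y ∈ affLat B, g y ∈ affLat A) ∧
    (∀ x ∈ affLat A, g (f x) = x) ∧
    (∀ y ∈ affLat B, f (g y) = y) ∧
    (∀ x y z, x ∈ affLat A → y ∈ affLat A → z ∈ affLat A →
      f (x + y - z) = f x + f y - f z) ∧
    f '' (A : Set (ZLat n)) = (B : Set (ZLat m))

/-- `F` is a face of the configuration `A`: the intersection of a face of the
polytope `conv(A)` with `A` (the empty face and `A` itself are allowed). -/
def IsFaceOf {n : ℕ} (F A : Finset (ZLat n)) : Prop :=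
  F = ∅ ∨ (F ⊆ A ∧ ∃ l : (Fin n → ℝ) →ₗ[ℝ] ℝ,
    (F : Set (ZLat n)) = {x ∈ (A : Set (ZLat n)) | ∀ y ∈ A, l (toR y) ≤ l (toR x)})

/-- Faces `F_0, …, F_k` of `A` covering `A` form a Cayley decomposition of `A` if
there is a lattice projection `π : ℤ^n → ℤ^k` with `π(F_i) ⊆ {e_i}` for all `i`. -/
def IsCayleyDecomp {n k : ℕ} (A : Finset (ZLat n)) (F : Fin (k + 1) → Finset (ZLat n)) : Prop :=
  (∀ i, IsFaceOf (F i) A) ∧ (∀ a ∈ A, ∃ i, a ∈ F i) ∧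
    ∃ π : ZLat n →+ ZLat k, Function.Surjective π ∧ ∀ i, ∀ x ∈ F i, π x = cayleyE k i

/-- `conv(A)` contains an interior lattice point. -/
def HasIntLatPt {n : ℕ} (A : Finset (ZLat n)) : Prop :=
  ∃ x : ZLat n, toR x ∈ interior (convexHull ℝ (toR '' (A : Set (ZLat n))))

/-- The dilate `c · conv(A)` contains an interior lattice point. -/
def HasIntLatPtDilate {n : ℕ} (c : ℕ) (A : Finset (ZLat n)) : Prop :=
  ∃ x : ZLat n, toR x ∈ interior ((c : ℝ) • convexHull ℝ (toR '' (A : Set (ZLat n))))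

/-- The codegree of the lattice polytope `conv(A)`: the smallest `c ≥ 1` such that
`c · conv(A)` has an interior lattice point. -/
noncomputable def codeg {n : ℕ} (A : Finset (ZLat n)) : ℕ :=
  sInf {c : ℕ | 1 ≤ c ∧ HasIntLatPtDilate c A}

/-! ### Auxiliary machinery -/

section Infra
open Matrix
variable {a b c : ℕ}

lemma toR_add (x y : ZLat a) : toR (x + y) = toR x + toR y := by
  funext i; simp [toR]

lemma toR_sub (x y : ZLat a) : toR (x - y) = toR x - toR y := by
  funext i; simp [toR]

lemma toR_append {n k : ℕ} (x : ZLat n) (y : ZLat k) :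
    toR (Fin.append x y) = Fin.append (toR x) (toR y) := by
  funext j
  refine Fin.addCases (fun t => ?_) (fun t => ?_) j <;>
    simp [toR, Fin.append_left, Fin.append_right]

lemma append_add {n k : ℕ} (x y : ZLat n) (u v : ZLat k) :
    Fin.append x u + Fin.append y v = Fin.append (x + y) (u + v) := by
  funext j
  refine Fin.addCases (fun t => ?_) (fun t => ?_) j <;>
    simp [Fin.append_left, Fin.append_right]

lemma append_sub {n k : ℕ} (x y : ZLat n) (u v : ZLat k) :
    Fin.append x u - Fin.append y v = Fin.append (x - y) (u - v) := by
  funext j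
  refine Fin.addCases (fun t => ?_) (fun t => ?_) j <;>
    simp [Fin.append_left, Fin.append_right]

lemma append_affine {p q : ℕ} (c : ZLat q) (x y z : ZLat p) :
    Fin.append (x + y - z) c = Fin.append x c + Fin.append y c - Fin.append z c := by
  rw [append_add, append_sub, add_sub_cancel_right]

lemma append_inj {p q : ℕ} (c : ZLat q) :
    Function.Injective (fun v : ZLat p => Fin.append v c) := by
  intro u v h
  funext t
  have := congrFun h (Fin.castAdd q t)
  simpa [Fin.append_left] using this

/-- The integer matrix of an additive hom `ℤ^a →+ ℤ^b`. -/
def intMat (h : ZLat a →+ ZLat b) : Matrix (Fin b) (Fin a) ℤ :=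
  Matrix.of fun i j => h (Pi.single j 1) i

lemma intMat_mulVec (h : ZLat a →+ ZLat b) (v : ZLat a) :
    (intMat h).mulVec v = h v := by
  have hv : v = ∑ j, (v j) • (Pi.single j (1:ℤ) : ZLat a) := by
    simp_rw [← Pi.single_smul, smul_eq_mul, mul_one]
    exact (Finset.univ_sum_single v).symm
  conv_rhs => rw [hv]
  rw [map_sum]
  funext i
  simp only [Matrix.mulVec, dotProduct, intMat, Matrix.of_apply]
  rw [Finset.sum_apply]
  refine Finset.sum_congr rfl fun j _ => ?_
  rw [map_zsmul]
  simp [mul_comm]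

/-- The real matrix of an additive hom. -/
def realMat (h : ZLat a →+ ZLat b) : Matrix (Fin b) (Fin a) ℝ :=
  (intMat h).map ((↑) : ℤ → ℝ)

lemma realMat_toR (h : ZLat a →+ ZLat b) (v : ZLat a) :
    (realMat h).mulVec (toR v) = toR (h v) := by
  funext i
  have := congrFun (intMat_mulVec h v) i
  simp only [Matrix.mulVec, dotProduct] at this
  simp only [Matrix.mulVec, dotProduct, realMat, Matrix.map_apply, toR]
  rw [← this]
  push_cast
  rfl

lemma realMat_mulVec_inj (h : ZLat a →+ ZLat b) (hinj : Function.Injective h) :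
    ∀ w : Fin a → ℝ, (realMat h).mulVec w = 0 → w = 0 := by
  set M := intMat h with hM
  have hMz : ∀ v : ZLat a, M.mulVec v = 0 → v = 0 := by
    intro v hv
    rw [intMat_mulVec] at hv
    exact hinj (by simpa using hv)
  set N := Mᵀ * M with hN
  have hNz : ∀ v : ZLat a, N.mulVec v = 0 → v = 0 := by
    intro v hv
    apply hMz
    have h1 : v ⬝ᵥ N.mulVec v = 0 := by rw [hv]; simp
    rw [hN, ← Matrix.mulVec_mulVec, Matrix.dotProduct_mulVec, Matrix.vecMul_transpose] at h1
    have h2 : ∀ i, M.mulVec v i = 0 := by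
      intro i
      have hnn : ∀ i ∈ Finset.univ, (0:ℤ) ≤ (M.mulVec v i) * (M.mulVec v i) :=
        fun i _ => mul_self_nonneg _
      have := (Finset.sum_eq_zero_iff_of_nonneg hnn).mp h1 i (Finset.mem_univ i)
      exact mul_self_eq_zero.mp this
    funext i; exact h2 i
  have hdet : N.det ≠ 0 := by
    intro hd
    obtain ⟨v, hv0, hv⟩ := Matrix.exists_mulVec_eq_zero_iff.mpr hd
    exact hv0 (hNz v hv)
  intro w hw
  set Nr : Matrix (Fin a) (Fin a) ℝ := N.map ((↑) : ℤ → ℝ) with hNr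
  have hNrdet : Nr.det ≠ 0 := by
    have hcast : Nr.det = ((N.det : ℤ) : ℝ) := by
      rw [hNr, show (((↑) : ℤ → ℝ)) = ⇑(Int.castRingHom ℝ) from rfl,
        ← RingHom.mapMatrix_apply, ← RingHom.map_det]
    rw [hcast]
    exact_mod_cast hdet
  have hNrw : Nr.mulVec w = 0 := by
    have hmap : Nr = (realMat h)ᵀ * (realMat h) := by
      rw [hNr, hN, show (((↑) : ℤ → ℝ)) = ((Int.castRingHom ℝ) : ℤ → ℝ) from rfl,
        Matrix.map_mul]
      rw [Matrix.transpose_map]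
      rfl
    rw [hmap, ← Matrix.mulVec_mulVec, hw]
    simp
  have hu : IsUnit Nr.det := isUnit_iff_ne_zero.mpr hNrdet
  calc w = (1 : Matrix (Fin a) (Fin a) ℝ).mulVec w := by simp
    _ = (Nr⁻¹ * Nr).mulVec w := by rw [Matrix.nonsing_inv_mul _ hu]
    _ = Nr⁻¹.mulVec (Nr.mulVec w) := by rw [Matrix.mulVec_mulVec]
    _ = 0 := by rw [hNrw]; simp

/-- Real scalar extension of an additive functional `ℤ^a →+ ℤ`. -/
lemma exists_scalar_ext (h : ZLat a →+ ℤ) :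
    ∃ L : (Fin a → ℝ) →ₗ[ℝ] ℝ, ∀ v, ((h v : ℤ) : ℝ) = L (toR v) := by
  refine ⟨{ toFun := fun w => ∑ j, w j * ((h (Pi.single j 1) : ℤ) : ℝ),
            map_add' := ?_, map_smul' := ?_ }, ?_⟩
  · intro u v
    simp [add_mul, Finset.sum_add_distrib]
  · intro r u
    simp [Finset.mul_sum, mul_assoc]
  · intro v
    have hv : v = ∑ j, (v j) • (Pi.single j (1:ℤ) : ZLat a) := by
      simp_rw [← Pi.single_smul, smul_eq_mul, mul_one]
      exact (Finset.univ_sum_single v).symm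
    conv_lhs => rw [hv, map_sum]
    push_cast
    simp only [LinearMap.coe_mk, AddHom.coe_mk, toR]
    refine Finset.sum_congr rfl fun j _ => ?_
    rw [map_zsmul, smul_eq_mul]
    push_cast
    ring

end Infra

section Dim
variable {a b c : ℕ}

lemma confDim_mono {S T : Finset (ZLat a)} (h : S ⊆ T) : confDim S ≤ confDim T :=
  Submodule.finrank_mono
    (AffineSubspace.direction_le (affineSpan_mono ℝ (Set.image_mono (by exact_mod_cast h))))

lemma image_span_eq (f : ZLat a → ZLat b) (F : (Fin a → ℝ) →ᵃ[ℝ] (Fin b → ℝ))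
    (S : Finset (ZLat a)) (hF : ∀ x ∈ S, toR (f x) = F (toR x)) :
    affineSpan ℝ (toR '' ((S.image f : Finset (ZLat b)) : Set (ZLat b))) =
      (affineSpan ℝ (toR '' (S : Set (ZLat a)))).map F := by
  rw [AffineSubspace.map_span]
  congr 1
  rw [Finset.coe_image, Set.image_image, Set.image_image]
  exact Set.image_congr hF

lemma confDim_image_le (f : ZLat a → ZLat b) (F : (Fin a → ℝ) →ᵃ[ℝ] (Fin b → ℝ))
    (S : Finset (ZLat a)) (hF : ∀ x ∈ S, toR (f x) = F (toR x)) :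
    confDim (S.image f) ≤ confDim S := by
  rw [confDim, confDim, image_span_eq f F S hF, AffineSubspace.map_direction]
  exact Submodule.finrank_map_le _ _

lemma confDim_image_ge (f : ZLat a → ZLat b) (F : (Fin a → ℝ) →ᵃ[ℝ] (Fin b → ℝ))
    (S : Finset (ZLat a)) (hF : ∀ x ∈ S, toR (f x) = F (toR x))
    (hinj : Function.Injective F.linear) :
    confDim S ≤ confDim (S.image f) := by
  rw [confDim, confDim, image_span_eq f F S hF, AffineSubspace.map_direction]
  exact le_of_eq (Submodule.equivMapOfInjective F.linear hinj _).finrank_eq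

/-- Any globally ℤ-affine map has a compatible real affine map. -/
lemma exists_affineMap (f : ZLat a → ZLat b)
    (haff : ∀ x y z, f (x + y - z) = f x + f y - f z) :
    ∃ F : (Fin a → ℝ) →ᵃ[ℝ] (Fin b → ℝ), (∀ x, toR (f x) = F (toR x)) ∧
      (Function.Injective f → Function.Injective F.linear) := by
  have hmk : ∀ u v : ZLat a, (fun v => f v - f 0) (u + v) =
      (fun v => f v - f 0) u + (fun v => f v - f 0) v := by
    intro u v
    have h := haff u v 0
    rw [sub_zero] at h
    simp only [h]
    abel
  set lf : ZLat a →+ ZLat b := AddMonoidHom.mk' (fun v => f v - f 0) hmk with hlf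
  set L : (Fin a → ℝ) →ₗ[ℝ] (Fin b → ℝ) := Matrix.mulVecLin (realMat lf) with hL
  refine ⟨⟨fun w => L w + toR (f 0), L, ?_⟩, ?_, ?_⟩
  · intro p v
    show L (v + p) + toR (f 0) = L v + (L p + toR (f 0))
    rw [map_add]
    abel
  · intro x
    have h1 : f x = lf x + f 0 := by simp [hlf]
    rw [h1, toR_add]
    show _ = L (toR x) + toR (f 0)
    rw [hL]
    rw [show Matrix.mulVecLin (realMat lf) (toR x) = (realMat lf).mulVec (toR x) from rfl,
      realMat_toR]
  · intro hfinj
    have hlfinj : Function.Injective lf := by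
      intro u v huv
      have huv' : f u - f 0 = f v - f 0 := huv
      exact hfinj (by linear_combination (norm := abel) huv')
    intro w w' hww
    have hww' : L w = L w' := hww
    have h0 : L (w - w') = 0 := by rw [map_sub, hww', sub_self]
    have := realMat_mulVec_inj lf hlfinj (w - w') h0
    exact sub_eq_zero.mp this

lemma le_confDim (S : Finset (ZLat a)) (P : (Fin a → ℝ) →ₗ[ℝ] (Fin c → ℝ))
    (h : ∀ t : Fin c, ∃ w ∈ (affineSpan ℝ (toR '' (S : Set (ZLat a)))).direction,
      P w = Pi.single t 1) :
    c ≤ confDim S := by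
  have htop : Submodule.map P (affineSpan ℝ (toR '' (S : Set (ZLat a)))).direction = ⊤ := by
    rw [Submodule.eq_top_iff']
    intro u
    have hu : u = ∑ t, Pi.single t (u t) := (Finset.univ_sum_single u).symm
    rw [hu]
    refine Submodule.sum_mem _ fun t _ => ?_
    have hs : (Pi.single t (u t) : Fin c → ℝ) = u t • (Pi.single t (1:ℝ) : Fin c → ℝ) := by
      rw [← Pi.single_smul, smul_eq_mul, mul_one]
    rw [hs]
    refine Submodule.smul_mem _ _ ?_
    obtain ⟨w, hw, hPw⟩ := h t
    exact hPw ▸ Submodule.mem_map_of_mem hw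
  have h1 := Submodule.finrank_map_le P (affineSpan ℝ (toR '' (S : Set (ZLat a)))).direction
  rw [htop, finrank_top] at h1
  simpa [confDim] using h1

lemma vectorSpan_eq_top_of_confDim (S : Finset (ZLat a)) (h : confDim S = a) :
    vectorSpan ℝ (toR '' (S : Set (ZLat a))) = ⊤ := by
  rw [← direction_affineSpan]
  apply Submodule.eq_top_of_finrank_eq
  rw [show Module.finrank ℝ (Fin a → ℝ) = a by simp]
  exact h

lemma nonempty_of_confDim_pos {S : Finset (ZLat a)} (h : 0 < confDim S) : S.Nonempty := by
  rcases S.eq_empty_or_nonempty with rfl | h'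
  · have he : (toR '' ((∅ : Finset (ZLat a)) : Set (ZLat a))) = (∅ : Set (Fin a → ℝ)) := by
      simp
    rw [confDim, he, AffineSubspace.span_empty, AffineSubspace.direction_bot] at h
    simp at h
  · exact h'

end Dim
section CayleyAux
variable {n k : ℕ}

lemma cayleyE_zero (k : ℕ) : cayleyE k 0 = 0 := by
  funext j; simp [cayleyE]

lemma cayleyE_succ_apply (k : ℕ) (m : Fin k) (t : Fin k) :
    cayleyE k m.succ t = if t = m then 1 else 0 := by
  simp only [cayleyE, Fin.val_succ]
  refine if_congr ?_ rfl rfl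
  rw [Fin.ext_iff]
  omega

lemma cayleyE_injective (k : ℕ) : Function.Injective (cayleyE k) := by
  have hsum : ∀ i : Fin (k+1), (∑ t : Fin k, (((t : ℕ) : ℤ) + 1) * cayleyE k i t) = ((i:ℕ) : ℤ) := by
    intro i
    induction i using Fin.cases with
    | zero => simp [cayleyE]
    | succ m =>
      rw [Finset.sum_congr rfl (fun t _ => by rw [cayleyE_succ_apply])]
      simp [Finset.sum_ite_eq' Finset.univ m (fun t => ((t:ℕ):ℤ) + 1)]
  intro i i' h
  have := hsum i
  rw [h, hsum i'] at this
  have : (i:ℕ) = (i':ℕ) := by exact_mod_cast this.symm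
  exact Fin.ext this

lemma mem_cayley {A : Fin (k+1) → Finset (ZLat n)} {x : ZLat (n+k)} :
    x ∈ cayley A ↔ ∃ j, ∃ a ∈ A j, x = Fin.append a (cayleyE k j) := by
  simp only [cayley, Finset.mem_biUnion, Finset.mem_univ, true_and, Finset.mem_image]
  constructor
  · rintro ⟨j, a, ha, rfl⟩; exact ⟨j, a, ha, rfl⟩
  · rintro ⟨j, a, ha, rfl⟩; exact ⟨j, a, ha, rfl⟩

lemma append_mem_cayley {A : Fin (k+1) → Finset (ZLat n)} {j : Fin (k+1)} {a : ZLat n}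
    (ha : a ∈ A j) : Fin.append a (cayleyE k j) ∈ cayley A :=
  mem_cayley.mpr ⟨j, a, ha, rfl⟩

/-- The projection onto the last `q` coordinates. -/
def tailHom (p q : ℕ) : ZLat (p + q) →+ ZLat q :=
  AddMonoidHom.mk' (fun y t => y (Fin.natAdd p t)) (fun _ _ => rfl)

lemma tailHom_append (p q : ℕ) (x : ZLat p) (y : ZLat q) :
    tailHom p q (Fin.append x y) = y := by
  funext t
  show Fin.append x y (Fin.natAdd p t) = y t
  rw [Fin.append_right]

/-- The affine functional separating the `i`-th Cayley factor. -/
lemma exists_chi (r : ℕ) (i : Fin (r+1)) :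
    ∃ (χ : ZLat r →+ ℤ) (c : ℤ), ∀ i', χ (cayleyE r i') + c = if i' = i then 1 else 0 := by
  induction i using Fin.cases with
  | zero =>
    refine ⟨AddMonoidHom.mk' (fun w => -∑ t, w t) (fun u v => by
      show -∑ t, (u t + v t) = _
      rw [Finset.sum_add_distrib]; ring), 1, fun i' => ?_⟩
    show -(∑ t, cayleyE r i' t) + 1 = _
    induction i' using Fin.cases with
    | zero => simp [cayleyE]
    | succ m =>
      rw [Finset.sum_congr rfl (fun t _ => by rw [cayleyE_succ_apply])]
      rw [Finset.sum_ite_eq' Finset.univ m (fun _ => (1:ℤ))]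
      simp [(Fin.succ_ne_zero m)]
  | succ t =>
    refine ⟨Pi.evalAddMonoidHom (fun _ : Fin r => ℤ) t, 0, fun i' => ?_⟩
    rw [add_zero]
    show (if ((t:ℕ) + 1 = (i':ℕ)) then (1:ℤ) else 0) = _
    refine if_congr ?_ rfl rfl
    rw [Fin.ext_iff, Fin.val_succ]
    omega

/-- Inclusion `ℝ^p → ℝ^{p+q}` as a linear map. -/
def incL (p q : ℕ) : (Fin p → ℝ) →ₗ[ℝ] (Fin (p + q) → ℝ) where
  toFun w := Fin.append w 0
  map_add' u v := by
    funext j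
    refine Fin.addCases (fun t => ?_) (fun t => ?_) j <;>
      simp [Fin.append_left, Fin.append_right]
  map_smul' c u := by
    funext j
    refine Fin.addCases (fun t => ?_) (fun t => ?_) j <;>
      simp [Fin.append_left, Fin.append_right]

lemma incL_toR (p q : ℕ) (v : ZLat p) :
    incL p q (toR v) = toR (Fin.append v (0 : ZLat q)) := by
  funext j
  show Fin.append (toR v) 0 j = toR (Fin.append v 0) j
  refine Fin.addCases (fun t => ?_) (fun t => ?_) j <;>
    simp [toR, Fin.append_left, Fin.append_right]

/-- The affine span of a Cayley sum of full-dimensional nonempty configurations is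
everything. -/
lemma cayley_span_top (A : Fin (k+1) → Finset (ZLat n))
    (hA : ∀ j, vectorSpan ℝ (toR '' ((A j : Set (ZLat n)))) = ⊤)
    (hne : ∀ j, (A j).Nonempty) :
    affineSpan ℝ (toR '' ((cayley A : Finset (ZLat (n+k))) : Set (ZLat (n+k)))) = ⊤ := by
  set D := vectorSpan ℝ (toR '' ((cayley A : Finset (ZLat (n+k))) : Set (ZLat (n+k)))) with hD
  have hι : ∀ w : Fin n → ℝ, incL n k w ∈ D := by
    have hsub : vectorSpan ℝ (toR '' ((A 0 : Set (ZLat n)))) ≤ Submodule.comap (incL n k) D := by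
      rw [vectorSpan_def, Submodule.span_le]
      rintro w ⟨u, hu, v, hv, rfl⟩
      obtain ⟨cu, hcu, rfl⟩ := hu
      obtain ⟨cv, hcv, rfl⟩ := hv
      show incL n k (toR cu - toR cv) ∈ D
      rw [map_sub]
      rw [incL_toR, incL_toR]
      have h0 : (0 : ZLat k) = cayleyE k 0 := (cayleyE_zero k).symm
      rw [h0]
      exact vsub_mem_vectorSpan ℝ
        (Set.mem_image_of_mem toR (by exact_mod_cast append_mem_cayley hcu))
        (Set.mem_image_of_mem toR (by exact_mod_cast append_mem_cayley hcv))
    intro w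
    exact hsub (by rw [hA 0]; trivial)
  have hbasis : ∀ m : Fin (n+k), (Pi.single m 1 : Fin (n+k) → ℝ) ∈ D := by
    intro m
    refine Fin.addCases (fun t => ?_) (fun t => ?_) m
    · have : (Pi.single (Fin.castAdd k t) 1 : Fin (n+k) → ℝ) = incL n k (Pi.single t 1) := by
        show _ = Fin.append (Pi.single t (1:ℝ)) 0
        funext j
        refine Fin.addCases (fun t' => ?_) (fun t' => ?_) j
        · rw [Fin.append_left]
          rcases eq_or_ne t' t with rfl | hne'
          · simp
          · rw [Pi.single_apply, Pi.single_apply, if_neg hne', if_neg (by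
              simp only [Fin.ext_iff, Fin.coe_castAdd]
              exact fun hc => hne' (Fin.ext hc))]
        · rw [Fin.append_right]
          rw [Pi.single_apply]
          rw [if_neg (by
            simp only [Fin.ext_iff, Fin.coe_natAdd, Fin.coe_castAdd]
            omega)]
          rfl
      rw [this]
      exact hι _
    · obtain ⟨a0, ha0⟩ := hne 0
      obtain ⟨at1, hat1⟩ := hne t.succ
      have e1 : toR (Fin.append at1 (cayleyE k t.succ)) - toR (Fin.append a0 (cayleyE k 0)) ∈ D := by
        exact vsub_mem_vectorSpan ℝ
          (Set.mem_image_of_mem toR (by exact_mod_cast append_mem_cayley hat1))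
          (Set.mem_image_of_mem toR (by exact_mod_cast append_mem_cayley ha0))
      have e2 : incL n k (toR at1 - toR a0) ∈ D := hι _
      have heq : (Pi.single (Fin.natAdd n t) 1 : Fin (n+k) → ℝ) =
          (toR (Fin.append at1 (cayleyE k t.succ)) - toR (Fin.append a0 (cayleyE k 0)))
            - incL n k (toR at1 - toR a0) := by
        show _ = _ - Fin.append (toR at1 - toR a0) 0
        rw [toR_append, toR_append]
        funext j
        refine Fin.addCases (fun t' => ?_) (fun t' => ?_) j
        · simp only [Pi.sub_apply, Fin.append_left]
          rw [Pi.single_apply, if_neg (by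
            simp only [Fin.ext_iff, Fin.coe_castAdd, Fin.coe_natAdd]
            omega)]
          ring
        · simp only [Pi.sub_apply, Fin.append_right, toR]
          rw [cayleyE_zero, cayleyE_succ_apply]
          have hcond : (Fin.natAdd n t' = Fin.natAdd n t) ↔ (t' = t) := by
            simp [Fin.ext_iff]
          rw [Pi.single_apply]
          rcases eq_or_ne t' t with rfl | hne'
          · simp
          · rw [if_neg (by rw [hcond]; exact hne'), if_neg hne']
            simp
      rw [heq]
      exact Submodule.sub_mem _ e1 e2
  have hDtop : D = ⊤ := by
    rw [Submodule.eq_top_iff']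
    intro u
    have hu : u = ∑ m, Pi.single m (u m) := (Finset.univ_sum_single u).symm
    rw [hu]
    refine Submodule.sum_mem _ fun m _ => ?_
    have hs : (Pi.single m (u m) : Fin (n+k) → ℝ) = u m • (Pi.single m (1:ℝ) : Fin (n+k) → ℝ) := by
      rw [← Pi.single_smul, smul_eq_mul, mul_one]
    rw [hs]
    exact Submodule.smul_mem _ _ (hbasis m)
  -- conclude the affine span is everything
  obtain ⟨a0, ha0⟩ := hne 0
  have hp : toR (Fin.append a0 (cayleyE k 0)) ∈
      affineSpan ℝ (toR '' ((cayley A : Finset (ZLat (n+k))) : Set (ZLat (n+k)))) :=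
    subset_affineSpan ℝ _ (Set.mem_image_of_mem toR (by exact_mod_cast append_mem_cayley ha0))
  rw [eq_top_iff]
  intro x _
  have hdir : x - toR (Fin.append a0 (cayleyE k 0)) ∈
      (affineSpan ℝ (toR '' ((cayley A : Finset (ZLat (n+k))) : Set (ZLat (n+k))))).direction := by
    rw [direction_affineSpan, ← hD, hDtop]
    trivial
  have := AffineSubspace.vadd_mem_of_mem_direction hdir hp
  simpa using this

end CayleyAux
/-- If `A_0, …, A_k ⊆ ℤ^n` are full-dimensional configurations and
`B_0, …, B_r ⊆ ℤ^{n+k-r}` are nonempty configurations with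
`A_0 * ⋯ * A_k ≅ B_0 * ⋯ * B_r` in `ℤ^{n+k}`, then `dim(B_i) ≥ min(k, n)` for all `i`. -/
theorem cayley_summand_dim_ge_min {n k r : ℕ} (hr : r ≤ n + k)
    (A : Fin (k + 1) → Finset (ZLat n)) (hfull : ∀ i, confDim (A i) = n)
    (B : Fin (r + 1) → Finset (ZLat (n + k - r))) (hB : ∀ i, (B i).Nonempty)
    (hiso : ConfigIso (cayley A) (cayley B)) :
    ∀ i, min k n ≤ confDim (B i) := by
  intro i
  rcases Nat.eq_zero_or_pos n with hn | hn
  · have h0 : min k n = 0 := by omega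
    rw [h0]
    exact Nat.zero_le _
  obtain ⟨f, g, hfm, hgm, hgf, hfg, haffOn, himg⟩ := hiso
  have hAne : ∀ j, (A j).Nonempty := fun j =>
    nonempty_of_confDim_pos (by rw [hfull j]; exact hn)
  have hAtop : ∀ j, vectorSpan ℝ (toR '' ((A j : Set (ZLat n)))) = ⊤ :=
    fun j => vectorSpan_eq_top_of_confDim _ (hfull j)
  have hspan := cayley_span_top A hAtop hAne
  have hLat : ∀ x, x ∈ affLat (cayley A) := by
    intro x
    show toR x ∈ affineSpan ℝ (toR '' ((cayley A : Finset (ZLat (n + k))) : Set (ZLat (n + k))))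
    rw [hspan]
    trivial
  have haff : ∀ x y z, f (x + y - z) = f x + f y - f z :=
    fun x y z => haffOn x y z (hLat x) (hLat y) (hLat z)
  have hginv : ∀ x, g (f x) = x := fun x => hgf x (hLat x)
  have hfinj : Function.Injective f := fun u v h => by rw [← hginv u, h, hginv]
  obtain ⟨F, hF, hFinj'⟩ := exists_affineMap f haff
  have hFinj := hFinj' hfinj
  set T : Finset (ZLat (n + k - r + r)) :=
    (B i).image (fun b => Fin.append b (cayleyE r i)) with hT
  obtain ⟨Fb, hFb, _⟩ := exists_affineMap
    (fun b : ZLat (n + k - r) => Fin.append b (cayleyE r i)) (append_affine _)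
  have hTle : confDim T ≤ confDim (B i) := confDim_image_le _ Fb _ (fun x _ => hFb x)
  have hchar : ∀ x ∈ cayley A, ∃ i'' : Fin (r + 1), ∃ b ∈ B i'',
      f x = Fin.append b (cayleyE r i'') ∧ (f x ∈ T ↔ i'' = i) := by
    intro x hx
    have hfx : f x ∈ cayley B := by
      have h1 : f x ∈ (cayley B : Set (ZLat (n + k - r + r))) := by
        rw [← himg]
        exact Set.mem_image_of_mem f (by exact_mod_cast hx)
      exact_mod_cast h1
    obtain ⟨i'', b, hb, heq⟩ := mem_cayley.mp hfx
    refine ⟨i'', b, hb, heq, ?_⟩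
    constructor
    · intro hxT
      rw [hT, Finset.mem_image] at hxT
      obtain ⟨b', hb', heq'⟩ := hxT
      have h2 := congrArg (tailHom (n + k - r) r) (heq.symm.trans heq'.symm)
      rw [tailHom_append, tailHom_append] at h2
      exact cayleyE_injective r h2
    · rintro rfl
      rw [hT, heq]
      exact Finset.mem_image_of_mem _ hb
  by_cases hcase : ∀ j : Fin (k + 1), ∃ a ∈ A j, f (Fin.append a (cayleyE k j)) ∈ T
  case pos =>
    choose a ha hfa using hcase
    set S : Finset (ZLat (n + k)) :=
      Finset.univ.image (fun j : Fin (k + 1) => Fin.append (a j) (cayleyE k j)) with hS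
    have h1 : k ≤ confDim S := by
      apply le_confDim S (LinearMap.funLeft ℝ ℝ (Fin.natAdd n))
      intro t
      refine ⟨toR (Fin.append (a t.succ) (cayleyE k t.succ)) -
        toR (Fin.append (a 0) (cayleyE k 0)), ?_, ?_⟩
      · rw [direction_affineSpan]
        refine vsub_mem_vectorSpan ℝ
          (Set.mem_image_of_mem toR ?_) (Set.mem_image_of_mem toR ?_)
        · exact_mod_cast Finset.mem_image_of_mem _ (Finset.mem_univ t.succ)
        · exact_mod_cast Finset.mem_image_of_mem _ (Finset.mem_univ 0)
      · funext t'
        show (toR (Fin.append (a t.succ) (cayleyE k t.succ)) -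
          toR (Fin.append (a 0) (cayleyE k 0))) (Fin.natAdd n t') = _
        simp only [Pi.sub_apply, toR, Fin.append_right]
        rw [cayleyE_zero, cayleyE_succ_apply, Pi.single_apply]
        rcases eq_or_ne t' t with rfl | hne'
        · simp
        · rw [if_neg hne', if_neg hne']
          simp
    calc min k n ≤ k := min_le_left _ _
      _ ≤ confDim S := h1
      _ ≤ confDim (S.image f) := confDim_image_ge f F S (fun x _ => hF x) hFinj
      _ ≤ confDim T := confDim_mono (by
          intro y hy
          rw [Finset.mem_image] at hy
          obtain ⟨x, hx, rfl⟩ := hy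
          rw [hS, Finset.mem_image] at hx
          obtain ⟨j, _, rfl⟩ := hx
          exact hfa j)
      _ ≤ confDim (B i) := hTle
  case neg =>
    push_neg at hcase
    obtain ⟨j, hj⟩ := hcase
    obtain ⟨χ, c, hχ⟩ := exists_chi r i
    set Θ : ZLat (n + k) → ℤ := fun x => χ (tailHom (n + k - r) r (f x)) + c with hΘ
    have hΘaff : ∀ x y z, Θ (x + y - z) = Θ x + Θ y - Θ z := by
      intro x y z
      show χ (tailHom _ _ (f (x + y - z))) + c = _
      rw [haff, map_sub, map_add, map_sub, map_add]
      ring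
    have hΘval : ∀ x ∈ cayley A, (f x ∈ T ↔ Θ x = 1) ∧ (f x ∉ T → Θ x = 0) := by
      intro x hx
      obtain ⟨i'', b, hb, heq, hiff⟩ := hchar x hx
      have hval : Θ x = if i'' = i then 1 else 0 := by
        show χ (tailHom _ _ (f x)) + c = _
        rw [heq, tailHom_append]
        exact hχ i''
      have hnot : f x ∉ T → Θ x = 0 := by
        intro hmem
        rw [hval, if_neg (fun hcc => hmem (hiff.mpr hcc))]
      refine ⟨⟨fun hmem => by rw [hval, if_pos (hiff.mp hmem)], fun h1 => ?_⟩, hnot⟩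
      by_contra hmem
      rw [hnot hmem] at h1
      exact one_ne_zero h1.symm
    set lam : ZLat (n + k) →+ ℤ := AddMonoidHom.mk' (fun u => Θ u - Θ 0) (by
      intro u v
      have h := hΘaff u v 0
      rw [sub_zero] at h
      show Θ (u + v) - Θ 0 = (Θ u - Θ 0) + (Θ v - Θ 0)
      omega) with hlam
    have hshift : ∀ x u, Θ (x + u) = Θ x + lam u := by
      intro x u
      have h := hΘaff x u 0
      rw [sub_zero] at h
      show _ = Θ x + (Θ u - Θ 0)
      omega
    have hzero : ∀ a' ∈ A j, Θ (Fin.append a' (cayleyE k j)) = 0 := fun a' ha' =>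
      (hΘval _ (append_mem_cayley ha')).2 (hj a' ha')
    have hlam0 : ∀ c' ∈ A j, ∀ d' ∈ A j, lam (Fin.append (c' - d') (0 : ZLat k)) = 0 := by
      intro c' hc' d' hd'
      have he : Fin.append d' (cayleyE k j) + Fin.append (c' - d') (0 : ZLat k) =
          Fin.append c' (cayleyE k j) := by
        rw [append_add, show d' + (c' - d') = c' from by abel, add_zero]
      have h := hshift (Fin.append d' (cayleyE k j)) (Fin.append (c' - d') (0 : ZLat k))
      rw [he, hzero c' hc', hzero d' hd'] at h
      omega
    obtain ⟨Ll, hLl⟩ := exists_scalar_ext lam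
    have hker : ∀ w : Fin n → ℝ, Ll (incL n k w) = 0 := by
      have hle : vectorSpan ℝ (toR '' ((A j : Set (ZLat n)))) ≤
          LinearMap.ker (Ll.comp (incL n k)) := by
        rw [vectorSpan_def, Submodule.span_le]
        rintro w ⟨u, hu, v, hv, rfl⟩
        obtain ⟨cu, hcu, rfl⟩ := hu
        obtain ⟨cv, hcv, rfl⟩ := hv
        rw [SetLike.mem_coe, LinearMap.mem_ker, LinearMap.comp_apply]
        have heq2 : incL n k (toR cu -ᵥ toR cv) = toR (Fin.append (cu - cv) (0 : ZLat k)) := by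
          rw [show toR cu -ᵥ toR cv = toR (cu - cv) from (toR_sub cu cv).symm, incL_toR]
        rw [heq2, ← hLl]
        exact_mod_cast hlam0 cu hcu cv hcv
      intro w
      have hw : w ∈ vectorSpan ℝ (toR '' ((A j : Set (ZLat n)))) := by
        rw [hAtop j]
        trivial
      have h := hle hw
      rw [LinearMap.mem_ker, LinearMap.comp_apply] at h
      exact h
    obtain ⟨b0, hb0⟩ := hB i
    have hb0' : Fin.append b0 (cayleyE r i) ∈ f '' ((cayley A : Finset _) : Set (ZLat (n + k))) := by
      rw [himg]
      exact_mod_cast append_mem_cayley hb0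
    obtain ⟨x₀, hx₀, hfx₀⟩ := hb0'
    have hx₀A : x₀ ∈ cayley A := by exact_mod_cast hx₀
    have hx₀T : f x₀ ∈ T := by
      rw [hfx₀, hT]
      exact Finset.mem_image_of_mem _ hb0
    obtain ⟨j', a', ha', hx₀eq⟩ := mem_cayley.mp hx₀A
    have hΘx₀ : Θ x₀ = 1 := ((hΘval x₀ hx₀A).1).mp hx₀T
    have hall : ∀ a'' ∈ A j', f (Fin.append a'' (cayleyE k j')) ∈ T := by
      intro a'' ha''
      have hdec : Fin.append a'' (cayleyE k j') = x₀ + Fin.append (a'' - a') (0 : ZLat k) := by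
        rw [hx₀eq, append_add, show a' + (a'' - a') = a'' from by abel, add_zero]
      have hlamv : lam (Fin.append (a'' - a') (0 : ZLat k)) = 0 := by
        have hcast : ((lam (Fin.append (a'' - a') (0 : ZLat k)) : ℤ) : ℝ) = 0 := by
          rw [hLl, ← incL_toR]
          exact hker _
        exact_mod_cast hcast
      have hΘ1 : Θ (Fin.append a'' (cayleyE k j')) = 1 := by
        rw [hdec, hshift, hΘx₀, hlamv, add_zero]
      exact ((hΘval _ (append_mem_cayley ha'')).1).mpr hΘ1
    set Sl : Finset (ZLat (n + k)) := (A j').image (fun v => Fin.append v (cayleyE k j')) with hSl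
    obtain ⟨Fs, hFs, hFsinj'⟩ := exists_affineMap
      (fun v : ZLat n => Fin.append v (cayleyE k j')) (append_affine _)
    have hFsinj := hFsinj' (append_inj _)
    calc min k n ≤ n := min_le_right _ _
      _ = confDim (A j') := (hfull j').symm
      _ ≤ confDim Sl := confDim_image_ge _ Fs _ (fun x _ => hFs x) hFsinj
      _ ≤ confDim (Sl.image f) := confDim_image_ge f F _ (fun x _ => hF x) hFinj
      _ ≤ confDim T := confDim_mono (by
          intro y hy
          rw [Finset.mem_image] at hy
          obtain ⟨x, hx, rfl⟩ := hy
          rw [hSl, Finset.mem_image] at hx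
          obtain ⟨v, hv, rfl⟩ := hx
          exact hall v hv)
      _ ≤ confDim (B i) := hTle
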